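/- Let S₁ and S₂ be quasi-pseudo-regular subspaces of a Kreĭn space with S₁ ⊥ S₂ (in the indefinite inner product). Then S₁ + S₂ is quasi-pseudo-regular; moreover writing Sᵢ = Rᵢ ⊕ Nᵢ with Rᵢ regular and Nᵢ neutral, one has S₁+S₂ = (R₁+R₂) ⊕ (N₁+N₂) where R₁+R₂ is regular, N₁+N₂ is neutral, and (R₁+R₂) ∩ (N₁+N₂) = {0}. -/

import Mathlib

open ContinuousLinearMap

noncomputable section

namespace KreinPaper

variable {H : Type*} [NormedAddCommGroup H] [InnerProductSpace ℂ H] [CompleteSpace H]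

/-- The indefinite orthogonal companion of a subspace, with respect to the
indefinite inner product `[x, y] = ⟪J x, y⟫`. -/
def kOrth (J : H →L[ℂ] H) (S : Submodule ℂ H) : Submodule ℂ H where
  carrier := {y | ∀ x ∈ S, (inner ℂ (J x) y : ℂ) = 0}
  add_mem' := by
    intro a b ha hb x hx
    simp only [Set.mem_setOf_eq] at ha hb ⊢
    rw [inner_add_right, ha x hx, hb x hx, add_zero]
  zero_mem' := by
    intro x _
    exact inner_zero_right _
  smul_mem' := by
    intro c a ha x hx
    simp only [Set.mem_setOf_eq] at ha ⊢
    rw [inner_smul_right, ha x hx, mul_zero]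

/-- A regular subspace: closed, with `R ∩ R^⊥ = 0` and `R + R^⊥ = H`. -/
def IsRegular (J : H →L[ℂ] H) (R : Submodule ℂ H) : Prop :=
  IsClosed (R : Set H) ∧ R ⊓ kOrth J R = ⊥ ∧ R ⊔ kOrth J R = ⊤

/-- A neutral subspace: the indefinite inner product vanishes on it. -/
def IsNeutral (J : H →L[ℂ] H) (N : Submodule ℂ H) : Prop :=
  ∀ n ∈ N, (inner ℂ (J n) n : ℂ) = 0

/-- Two subspaces are orthogonal in the indefinite inner product. -/
def AreKOrth (J : H →L[ℂ] H) (A B : Submodule ℂ H) : Prop :=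
  ∀ a ∈ A, ∀ b ∈ B, (inner ℂ (J a) b : ℂ) = 0

/-- An operator range: the range of a bounded operator (equivalently, of a
bounded operator on `H` itself). -/
def IsOpRange (S : Submodule ℂ H) : Prop :=
  ∃ T : H →L[ℂ] H, LinearMap.range (T : H →ₗ[ℂ] H) = S

/-- Quasi-pseudo-regular subspace: an operator range which is the orthogonal
sum of a regular subspace and a neutral subspace. -/
def IsQpr (J : H →L[ℂ] H) (S : Submodule ℂ H) : Prop :=
  IsOpRange S ∧ ∃ R N : Submodule ℂ H,
    IsRegular J R ∧ IsNeutral J N ∧ AreKOrth J R N ∧ S = R ⊔ N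

/-- Pseudo-regular subspace: a closed subspace which is the orthogonal
sum of a regular subspace and a neutral subspace. -/
def IsPseudoRegular (J : H →L[ℂ] H) (S : Submodule ℂ H) : Prop :=
  IsClosed (S : Set H) ∧ ∃ R N : Submodule ℂ H,
    IsRegular J R ∧ IsNeutral J N ∧ AreKOrth J R N ∧ S = R ⊔ N

/-- A fundamental symmetry: a selfadjoint involution. -/
def IsFundSym (J : H →L[ℂ] H) : Prop :=
  IsSelfAdjoint J ∧ J ∘L J = ContinuousLinearMap.id ℂ H

/-- The indefinite (Kreĭn space) adjoint `A* = J A† J`. -/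
def kAdj (J : H →L[ℂ] H) (A : H →L[ℂ] H) : H →L[ℂ] H :=
  J ∘L (ContinuousLinearMap.adjoint A) ∘L J

/-! ### Auxiliary lemmas -/

open scoped ENNReal

section Aux

variable {α β : Type*}

lemma two_toReal_pos : (0:ℝ) < (2 : ℝ≥0∞).toReal := by norm_num

lemma memℓp_comp_inj (σ : α → β) (hσ : Function.Injective σ)
    (f : lp (fun _ : β => ℂ) 2) : Memℓp (fun a => f (σ a)) (2 : ℝ≥0∞) :=
  memℓp_gen (((lp.memℓp f).summable two_toReal_pos).comp_injective hσ)

/-- Pull-back along an injective map, as a continuous linear map on `ℓ²`. -/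
def lpCompL (σ : α → β) (hσ : Function.Injective σ) :
    lp (fun _ : β => ℂ) 2 →L[ℂ] lp (fun _ : α => ℂ) 2 :=
  LinearMap.mkContinuous
    { toFun := fun f => (⟨fun a => f (σ a), memℓp_comp_inj σ hσ f⟩ : lp (fun _ : α => ℂ) 2)
      map_add' := fun f g => by
        refine lp.ext (funext fun a => ?_)
        simp [lp.coeFn_add, Pi.add_apply]
        rfl
      map_smul' := fun c f => by
        refine lp.ext (funext fun a => ?_)
        simp [lp.coeFn_smul, Pi.smul_apply] }
    1
    (by
      intro f
      classical
      rw [one_mul]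
      refine lp.norm_le_of_forall_sum_le two_toReal_pos (norm_nonneg _) fun s => ?_
      have h1 : ∑ a ∈ s, ‖f (σ a)‖ ^ (2 : ℝ≥0∞).toReal
          = ∑ b ∈ s.image σ, ‖f b‖ ^ (2 : ℝ≥0∞).toReal := by
        rw [Finset.sum_image (fun x _ y _ h => hσ h)]
      calc ∑ a ∈ s, ‖(⟨fun a => f (σ a), memℓp_comp_inj σ hσ f⟩ :
              lp (fun _ : α => ℂ) 2) a‖ ^ (2 : ℝ≥0∞).toReal
          = ∑ b ∈ s.image σ, ‖f b‖ ^ (2 : ℝ≥0∞).toReal := h1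
        _ ≤ ‖f‖ ^ (2 : ℝ≥0∞).toReal := lp.sum_rpow_le_norm_rpow two_toReal_pos f _)

@[simp] lemma lpCompL_apply (σ : α → β) (hσ : Function.Injective σ)
    (f : lp (fun _ : β => ℂ) 2) (a : α) : lpCompL σ hσ f a = f (σ a) := rfl

lemma summable_elim_comp {ι : Type*} (e : (ι ⊕ ι) ≃ ι) {f g : ι → ℝ}
    (hf : Summable f) (hg : Summable g) :
    Summable (fun i => Sum.elim f g (e.symm i)) := by
  have hinl : Function.Injective (fun a : ι => e (Sum.inl a)) :=
    fun a c h => Sum.inl_injective (e.injective h)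
  have hinr : Function.Injective (fun a : ι => e (Sum.inr a)) :=
    fun a c h => Sum.inr_injective (e.injective h)
  set h1 : ι → ℝ := fun i => Sum.elim f (fun _ => (0:ℝ)) (e.symm i) with hh1
  set h2 : ι → ℝ := fun i => Sum.elim (fun _ => (0:ℝ)) g (e.symm i) with hh2
  have hs1 : Summable h1 := by
    have hv1 : ∀ x ∉ Set.range (fun a : ι => e (Sum.inl a)), h1 x = 0 := by
      intro x hx
      rcases hs : e.symm x with a | a
      · exact absurd ⟨a, by show e (Sum.inl a) = x; rw [← hs, Equiv.apply_symm_apply]⟩ hx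
      · simp [hh1, hs]
    refine (hinl.summable_iff hv1).1 ?_
    have hcomp : (h1 ∘ fun a : ι => e (Sum.inl a)) = f := by
      funext a; simp [hh1]
    rw [hcomp]; exact hf
  have hs2 : Summable h2 := by
    have hv2 : ∀ x ∉ Set.range (fun a : ι => e (Sum.inr a)), h2 x = 0 := by
      intro x hx
      rcases hs : e.symm x with a | a
      · simp [hh2, hs]
      · exact absurd ⟨a, by show e (Sum.inr a) = x; rw [← hs, Equiv.apply_symm_apply]⟩ hx
    refine (hinr.summable_iff hv2).1 ?_
    have hcomp : (h2 ∘ fun a : ι => e (Sum.inr a)) = g := by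
      funext a; simp [hh2]
    rw [hcomp]; exact hg
  have hsum : (fun i => Sum.elim f g (e.symm i)) = h1 + h2 := by
    funext i
    rcases hs : e.symm i with a | a <;> simp [hh1, hh2, hs]
  rw [hsum]; exact hs1.add hs2

end Aux


variable {J : H →L[ℂ] H}

lemma mem_kOrth {S : Submodule ℂ H} {y : H} :
    y ∈ kOrth J S ↔ ∀ x ∈ S, (inner ℂ (J x) y : ℂ) = 0 := Iff.rfl

lemma kOrth_isClosed (J : H →L[ℂ] H) (S : Submodule ℂ H) :
    IsClosed ((kOrth J S : Submodule ℂ H) : Set H) := by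
  have : ((kOrth J S : Submodule ℂ H) : Set H)
      = ⋂ x ∈ (S : Set H), (innerSL ℂ (J x)) ⁻¹' {0} := by
    ext y
    simp [mem_kOrth, Set.mem_iInter]
  rw [this]
  exact isClosed_biInter fun x _ => (isClosed_singleton).preimage (innerSL ℂ (J x)).continuous

lemma kOrth_sup (J : H →L[ℂ] H) (A B : Submodule ℂ H) :
    kOrth J (A ⊔ B) = kOrth J A ⊓ kOrth J B := by
  apply le_antisymm
  · intro y hy
    exact ⟨fun x hx => hy x (Submodule.mem_sup_left hx),
      fun x hx => hy x (Submodule.mem_sup_right hx)⟩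
  · rintro y ⟨h₁, h₂⟩ x hx
    obtain ⟨a, ha, c, hc, rfl⟩ := Submodule.mem_sup.1 hx
    rw [map_add, inner_add_left, h₁ a ha, h₂ c hc, add_zero]

lemma kOrth_swap (hJ : IsSelfAdjoint J) {a b : H} (h : (inner ℂ (J a) b : ℂ) = 0) :
    (inner ℂ (J b) a : ℂ) = 0 := by
  have hadj : ContinuousLinearMap.adjoint J = J :=
    (ContinuousLinearMap.isSelfAdjoint_iff' ).1 hJ
  calc (inner ℂ (J b) a : ℂ) = inner ℂ b (J a) := by
        conv_lhs => rw [← hadj]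
        exact ContinuousLinearMap.adjoint_inner_left J a b
    _ = (starRingEnd ℂ) (inner ℂ (J a) b) := (inner_conj_symm _ _).symm
    _ = 0 := by rw [h, map_zero]

/-- The (continuous) Krein-orthogonal projection onto a regular subspace. -/
lemma exists_regular_proj {R : Submodule ℂ H} (hR : IsRegular J R) :
    ∃ P : H →L[ℂ] H, (∀ x, P x ∈ R) ∧ (∀ x ∈ R, P x = x) ∧
      (∀ x ∈ kOrth J R, P x = 0) ∧ (∀ x, x - P x ∈ kOrth J R) := by
  obtain ⟨hcl, hinf, hsup⟩ := hR
  have hcompl : IsCompl R (kOrth J R) := ⟨disjoint_iff.2 hinf, codisjoint_iff.2 hsup⟩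
  have hclK := kOrth_isClosed J R
  set P0 := R.linearProjOfClosedCompl (kOrth J R) hcompl hcl hclK with hP0
  have hc : ∀ y : H, P0 y = R.projectionOnto (kOrth J R) hcompl y := fun y =>
    congrFun (Submodule.coe_continuous_linearProjOfClosedCompl' hcompl hcl hclK) y
  refine ⟨R.subtypeL ∘L P0, fun x => (P0 x).2, ?_, ?_, ?_⟩
  · intro x hx
    show ((P0 x : R) : H) = x
    rw [hc x, Submodule.projectionOnto_apply_of_mem_left hcompl hx]
  · intro x hx
    show ((P0 x : R) : H) = 0
    rw [hc x, Submodule.projectionOnto_apply_of_mem_right hcompl hx]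
    rfl
  · intro x
    have hsum : ((R.projectionOnto (kOrth J R) hcompl x : R) : H)
        + (((kOrth J R).projectionOnto R hcompl.symm x : kOrth J R) : H) = x :=
      Submodule.projection_add_projection_eq_self hcompl x
    have h2 : x - ((P0 x : R) : H)
        = (((kOrth J R).projectionOnto R hcompl.symm x : kOrth J R) : H) := by
      rw [hc x, eq_sub_of_add_eq hsum]
      abel
    show x - ((P0 x : R) : H) ∈ kOrth J R
    rw [h2]
    exact ((kOrth J R).projectionOnto R hcompl.symm x).2

lemma isRegular_sup (hJ : IsSelfAdjoint J) {R1 R2 : Submodule ℂ H}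
    (hR1 : IsRegular J R1) (hR2 : IsRegular J R2) (h12 : AreKOrth J R1 R2) :
    IsRegular J (R1 ⊔ R2) := by
  obtain ⟨P1, hP1mem, hP1l, hP1r, hP1sub⟩ := exists_regular_proj hR1
  obtain ⟨P2, hP2mem, hP2l, hP2r, hP2sub⟩ := exists_regular_proj hR2
  have hR2K : R2 ≤ kOrth J R1 := fun b hb => fun a ha => h12 a ha b hb
  have hR1K : R1 ≤ kOrth J R2 := fun a ha => fun b hb => kOrth_swap hJ (h12 a ha b hb)
  set Q : H →L[ℂ] H := P1 + P2 with hQ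
  have hQmem : ∀ x, Q x ∈ R1 ⊔ R2 := fun x =>
    Submodule.add_mem_sup (hP1mem x) (hP2mem x)
  have hQl : ∀ x ∈ R1 ⊔ R2, Q x = x := by
    intro x hx
    obtain ⟨a, ha, c, hc, rfl⟩ := Submodule.mem_sup.1 hx
    have h1 : Q a = a := by
      simp only [hQ, ContinuousLinearMap.add_apply, hP1l a ha, hP2r a (hR1K ha), add_zero]
    have h2 : Q c = c := by
      simp only [hQ, ContinuousLinearMap.add_apply, hP1r c (hR2K hc), hP2l c hc, zero_add]
    rw [map_add, h1, h2]
  have hQsub : ∀ x, x - Q x ∈ kOrth J (R1 ⊔ R2) := by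
    intro x
    rw [kOrth_sup]
    constructor
    · have h1 : x - Q x = (x - P1 x) - P2 x := by
        simp only [hQ, ContinuousLinearMap.add_apply]; abel
      rw [h1]
      exact Submodule.sub_mem _ (hP1sub x) (hR2K (hP2mem x))
    · have h2 : x - Q x = (x - P2 x) - P1 x := by
        simp only [hQ, ContinuousLinearMap.add_apply]; abel
      rw [h2]
      exact Submodule.sub_mem _ (hP2sub x) (hR1K (hP1mem x))
  refine ⟨?_, ?_, ?_⟩
  · have hset : ((R1 ⊔ R2 : Submodule ℂ H) : Set H) = {x | Q x = x} := by
      ext x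
      constructor
      · exact fun hx => hQl x hx
      · intro hx
        have hx' : Q x = x := hx
        have := hQmem x
        rwa [hx'] at this
    rw [hset]
    exact isClosed_eq Q.continuous continuous_id
  · rw [eq_bot_iff]
    intro x hx
    obtain ⟨hx1, hx2⟩ := Submodule.mem_inf.1 hx
    have h0 : Q x = 0 := by
      rw [kOrth_sup] at hx2
      simp only [hQ, ContinuousLinearMap.add_apply, hP1r x hx2.1, hP2r x hx2.2, add_zero]
    have hx0 : x = 0 := by rw [← hQl x hx1, h0]
    simp [hx0]
  · rw [eq_top_iff]
    intro x _
    exact Submodule.mem_sup.2 ⟨Q x, hQmem x, x - Q x, hQsub x, by abel⟩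

lemma isOpRange_of_isClosed {K : Submodule ℂ H} (hK : IsClosed (K : Set H)) :
    IsOpRange K := by
  haveI : CompleteSpace K := hK.completeSpace_coe
  refine ⟨K.subtypeL ∘L (K.orthogonalProjectionOnto), ?_⟩
  apply le_antisymm
  · rintro y ⟨x, rfl⟩
    exact (K.orthogonalProjectionOnto x).2
  · intro y hy
    refine ⟨y, ?_⟩
    show ((K.orthogonalProjectionOnto y : K) : H) = y
    rw [show K.orthogonalProjectionOnto y = (⟨y, hy⟩ : K) from
      Submodule.orthogonalProjectionOnto_mem_subspace_eq_self (K := K) ⟨y, hy⟩]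

lemma isOpRange_sup {S1 S2 : Submodule ℂ H} (h1 : IsOpRange S1) (h2 : IsOpRange S2) :
    IsOpRange (S1 ⊔ S2) := by
  by_cases hfd : FiniteDimensional ℂ H
  · exact isOpRange_of_isClosed (Submodule.closed_of_finiteDimensional _)
  · obtain ⟨w, b, hb⟩ := exists_hilbertBasis ℂ H
    haveI hw : Infinite w := by
      rw [Set.infinite_coe_iff]
      intro hfin
      apply hfd
      haveI : FiniteDimensional ℂ (Submodule.span ℂ (w : Set H)) :=
        FiniteDimensional.span_of_finite ℂ hfin
      have hcl : IsClosed ((Submodule.span ℂ (w : Set H)) : Set H) :=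
        Submodule.closed_of_finiteDimensional _
      have hdense : (Submodule.span ℂ (Set.range ⇑b)).topologicalClosure = ⊤ :=
        b.dense_span
      rw [hb] at hdense
      have hrange : Set.range ((↑) : w → H) = (w : Set H) := Subtype.range_coe
      rw [hrange] at hdense
      rw [IsClosed.submodule_topologicalClosure_eq hcl] at hdense
      have : FiniteDimensional ℂ (⊤ : Submodule ℂ H) := hdense ▸ inferInstance
      exact (Submodule.topEquiv : (⊤ : Submodule ℂ H) ≃ₗ[ℂ] H).finiteDimensional
    have hcard : Nonempty ((w ⊕ w) ≃ w) := by
      apply Cardinal.eq.1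
      simp only [Cardinal.mk_sum, Cardinal.lift_id]
      exact Cardinal.add_eq_self (Cardinal.aleph0_le_mk ↑w)
    obtain ⟨e⟩ := hcard
    have hinl : Function.Injective (fun i : w => e (Sum.inl i)) :=
      fun a c h => Sum.inl_injective (e.injective h)
    have hinr : Function.Injective (fun i : w => e (Sum.inr i)) :=
      fun a c h => Sum.inr_injective (e.injective h)
    set g1 : H →L[ℂ] H :=
      (b.repr.symm.toContinuousLinearEquiv : lp (fun _ : w => ℂ) 2 ≃L[ℂ] H).toContinuousLinearMap
        ∘L lpCompL _ hinl
        ∘L (b.repr.toContinuousLinearEquiv : H ≃L[ℂ] lp (fun _ : w => ℂ) 2).toContinuousLinearMap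
      with hg1def
    set g2 : H →L[ℂ] H :=
      (b.repr.symm.toContinuousLinearEquiv : lp (fun _ : w => ℂ) 2 ≃L[ℂ] H).toContinuousLinearMap
        ∘L lpCompL _ hinr
        ∘L (b.repr.toContinuousLinearEquiv : H ≃L[ℂ] lp (fun _ : w => ℂ) 2).toContinuousLinearMap
      with hg2def
    have hg1 : ∀ x, g1 x = b.repr.symm (lpCompL _ hinl (b.repr x)) := fun x => rfl
    have hg2 : ∀ x, g2 x = b.repr.symm (lpCompL _ hinr (b.repr x)) := fun x => rfl
    have hsurj : ∀ y1 y2 : H, ∃ x, g1 x = y1 ∧ g2 x = y2 := by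
      intro y1 y2
      have hmem : Memℓp (fun i : w => Sum.elim (⇑(b.repr y1)) (⇑(b.repr y2)) (e.symm i))
          (2 : ℝ≥0∞) := by
        apply memℓp_gen
        refine Summable.congr (summable_elim_comp e
          ((lp.memℓp (b.repr y1)).summable two_toReal_pos)
          ((lp.memℓp (b.repr y2)).summable two_toReal_pos)) ?_
        intro i
        rcases hs : e.symm i with a | a <;> simp [hs]
      set G : lp (fun _ : w => ℂ) 2 :=
        ⟨fun i => Sum.elim (⇑(b.repr y1)) (⇑(b.repr y2)) (e.symm i), hmem⟩ with hG
      refine ⟨b.repr.symm G, ?_, ?_⟩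
      · rw [hg1, b.repr.apply_symm_apply]
        have : lpCompL (fun i : w => e (Sum.inl i)) hinl G = b.repr y1 := by
          refine lp.ext (funext fun i => ?_)
          show G (e (Sum.inl i)) = b.repr y1 i
          simp [hG]
        rw [this, b.repr.symm_apply_apply]
      · rw [hg2, b.repr.apply_symm_apply]
        have : lpCompL (fun i : w => e (Sum.inr i)) hinr G = b.repr y2 := by
          refine lp.ext (funext fun i => ?_)
          show G (e (Sum.inr i)) = b.repr y2 i
          simp [hG]
        rw [this, b.repr.symm_apply_apply]
    obtain ⟨T1, hT1⟩ := h1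
    obtain ⟨T2, hT2⟩ := h2
    refine ⟨T1 ∘L g1 + T2 ∘L g2, ?_⟩
    apply le_antisymm
    · rintro y ⟨x, rfl⟩
      show T1 (g1 x) + T2 (g2 x) ∈ S1 ⊔ S2
      exact Submodule.add_mem_sup (hT1 ▸ LinearMap.mem_range_self _ _)
        (hT2 ▸ LinearMap.mem_range_self _ _)
    · intro y hy
      obtain ⟨y1, hy1, y2, hy2, rfl⟩ := Submodule.mem_sup.1 hy
      rw [← hT1] at hy1
      rw [← hT2] at hy2
      obtain ⟨x1, rfl⟩ := hy1
      obtain ⟨x2, rfl⟩ := hy2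
      obtain ⟨x, hx1, hx2⟩ := hsurj x1 x2
      exact ⟨x, by show T1 (g1 x) + T2 (g2 x) = _; rw [hx1, hx2]; rfl⟩
/-- the orthogonal sum of two orthogonal qpr subspaces is qpr,
with the indicated decomposition. -/
theorem sum_of_orth_qpr (J : H →L[ℂ] H) (hJ : IsFundSym J)
    (S1 S2 R1 R2 N1 N2 : Submodule ℂ H)
    (hS1 : IsOpRange S1) (hS2 : IsOpRange S2)
    (hR1 : IsRegular J R1) (hR2 : IsRegular J R2)
    (hN1 : IsNeutral J N1) (hN2 : IsNeutral J N2)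
    (hRN1 : AreKOrth J R1 N1) (hRN2 : AreKOrth J R2 N2)
    (hd1 : S1 = R1 ⊔ N1) (hd2 : S2 = R2 ⊔ N2)
    (horth : AreKOrth J S1 S2) :
    IsQpr J (S1 ⊔ S2) ∧
      S1 ⊔ S2 = (R1 ⊔ R2) ⊔ (N1 ⊔ N2) ∧
      IsRegular J (R1 ⊔ R2) ∧
      IsNeutral J (N1 ⊔ N2) ∧
      AreKOrth J (R1 ⊔ R2) (N1 ⊔ N2) ∧
      (R1 ⊔ R2) ⊓ (N1 ⊔ N2) = ⊥ := by
  obtain ⟨hJsa, -⟩ := hJ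
  have hR1S : R1 ≤ S1 := by rw [hd1]; exact le_sup_left
  have hN1S : N1 ≤ S1 := by rw [hd1]; exact le_sup_right
  have hR2S : R2 ≤ S2 := by rw [hd2]; exact le_sup_left
  have hN2S : N2 ≤ S2 := by rw [hd2]; exact le_sup_right
  have hRR : AreKOrth J R1 R2 := fun a ha c hc => horth a (hR1S ha) c (hR2S hc)
  have hReg : IsRegular J (R1 ⊔ R2) := isRegular_sup hJsa hR1 hR2 hRR
  have hNeu : IsNeutral J (N1 ⊔ N2) := by
    intro n hn
    obtain ⟨a, ha, c, hc, rfl⟩ := Submodule.mem_sup.1 hn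
    have h12 : (inner ℂ (J a) c : ℂ) = 0 := horth a (hN1S ha) c (hN2S hc)
    have h21 : (inner ℂ (J c) a : ℂ) = 0 := kOrth_swap hJsa h12
    rw [map_add, inner_add_left, inner_add_right, inner_add_right,
      hN1 a ha, hN2 c hc, h12, h21]
    ring
  have hKO : AreKOrth J (R1 ⊔ R2) (N1 ⊔ N2) := by
    intro r hr n hn
    obtain ⟨a, ha, c, hc, rfl⟩ := Submodule.mem_sup.1 hr
    obtain ⟨m, hm, k, hk, rfl⟩ := Submodule.mem_sup.1 hn
    have h11 := hRN1 a ha m hm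
    have h22 := hRN2 c hc k hk
    have h12 : (inner ℂ (J a) k : ℂ) = 0 := horth a (hR1S ha) k (hN2S hk)
    have h21 : (inner ℂ (J c) m : ℂ) = 0 :=
      kOrth_swap hJsa (horth m (hN1S hm) c (hR2S hc))
    rw [map_add, inner_add_left, inner_add_right, inner_add_right, h11, h12, h21, h22]
    ring
  have hsum : S1 ⊔ S2 = (R1 ⊔ R2) ⊔ (N1 ⊔ N2) := by
    rw [hd1, hd2]; exact sup_sup_sup_comm _ _ _ _
  have hop : IsOpRange (S1 ⊔ S2) := isOpRange_sup hS1 hS2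
  have hNleK : N1 ⊔ N2 ≤ kOrth J (R1 ⊔ R2) := fun n hn => fun r hr => hKO r hr n hn
  have hbot : (R1 ⊔ R2) ⊓ (N1 ⊔ N2) = ⊥ := by
    rw [eq_bot_iff, ← hReg.2.1]
    exact inf_le_inf_left _ hNleK
  exact ⟨⟨hop, R1 ⊔ R2, N1 ⊔ N2, hReg, hNeu, hKO, hsum⟩, hsum, hReg, hNeu, hKO, hbot⟩

end KreinPaper
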